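/- Let α ∈ (0,1), let t > 0, and let f : ℝ → ℝ be continuously differentiable on [0,t]. Then (1/Γ(1−α)) ∫₀ᵗ (t−τ)^{−α} f'(τ) dτ = (1/Γ(1−α)) · [ (f(t) − f(0))/t^{α} + α·t^{1−α} · ∫₀¹ ((f(t) − f(t − t·τ))/(t·τ)) · τ^{−α} dτ ]. -/

import Mathlib

open MeasureTheory Real Set Filter Topology

/-- Rescaled unit-interval representation of the Caputo fractional derivative of
order `α ∈ (0,1)` (equation (represent_1) of the paper). -/
theorem caputo_unit_interval_representation_order_lt_one
    (α t : ℝ) (hα : α ∈ Set.Ioo (0 : ℝ) 1) (ht : 0 < t)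
    (f : ℝ → ℝ) (hf : ContDiffOn ℝ 1 f (Set.Icc 0 t)) :
    (1 / Real.Gamma (1 - α)) * ∫ τ in Set.Ioo 0 t, (t - τ) ^ (-α) * deriv f τ =
      (1 / Real.Gamma (1 - α)) *
        ((f t - f 0) / t ^ α
          + α * t ^ (1 - α) *
              ∫ τ in Set.Ioo (0 : ℝ) 1,
                ((f t - f (t - t * τ)) / (t * τ)) * τ ^ (-α)) := by
  obtain ⟨hα0, hα1⟩ := hα
  have hfd : DifferentiableOn ℝ f (Icc 0 t) := hf.differentiableOn one_ne_zero
  have hgc : ContinuousOn (derivWithin f (Icc 0 t)) (Icc 0 t) :=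
    hf.continuousOn_derivWithin (uniqueDiffOn_Icc ht) le_rfl
  obtain ⟨M, hM⟩ := isCompact_Icc.exists_bound_of_continuousOn hgc
  -- Lipschitz bound
  have hlip : ∀ x ∈ Icc 0 t, ∀ y ∈ Icc (0:ℝ) t, ‖f y - f x‖ ≤ M * ‖y - x‖ := by
    intro x hx y hy
    exact (convex_Icc 0 t).norm_image_sub_le_of_norm_derivWithin_le hfd hM hx hy
  have hderiv : ∀ x ∈ Ioo 0 t, HasDerivAt f (deriv f x) x := by
    intro x hx
    exact ((hfd x (Ioo_subset_Icc_self hx)).differentiableAt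
      (Icc_mem_nhds hx.1 hx.2)).hasDerivAt
  have hderiv_bound : ∀ x ∈ Ioo 0 t, ‖deriv f x‖ ≤ M := by
    intro x hx
    rw [← derivWithin_of_mem_nhds (Icc_mem_nhds hx.1 hx.2)]
    exact hM x (Ioo_subset_Icc_self hx)
  -- base integrability of (t-τ)^(-α) on Ioo 0 t
  have Ibase : IntegrableOn (fun τ : ℝ => (t - τ) ^ (-α)) (Ioo 0 t) := by
    have h1 : IntervalIntegrable (fun x : ℝ => x ^ (-α)) volume 0 t :=
      intervalIntegral.intervalIntegrable_rpow' (by linarith)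
    have h2 := (h1.comp_sub_left t).symm
    simp only [sub_zero, sub_self] at h2
    rw [intervalIntegrable_iff_integrableOn_Ioc_of_le ht.le] at h2
    exact h2.mono_set Ioo_subset_Ioc_self
  have hMbase : IntegrableOn (fun τ : ℝ => M * (t - τ) ^ (-α)) (Ioo 0 t) :=
    Ibase.const_mul M
  -- measurability helpers
  have hfcont : ContinuousOn f (Ioo 0 t) := hf.continuousOn.mono Ioo_subset_Icc_self
  have hrpow_cont : ∀ r : ℝ, ContinuousOn (fun τ : ℝ => (t - τ) ^ r) (Ioo 0 t) := by
    intro r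
    apply ContinuousOn.rpow_const (continuous_const.sub continuous_id).continuousOn
    intro x hx
    exact Or.inl (sub_pos.2 hx.2).ne'
  have rpow_mul_self : ∀ x : ℝ, x ∈ Ioo 0 t → (t - x) ^ (-α - 1) * (t - x) = (t - x) ^ (-α) := by
    intro x hx
    have hpos : 0 < t - x := sub_pos.2 hx.2
    calc (t - x) ^ (-α - 1) * (t - x)
        = (t - x) ^ (-α - 1) * (t - x) ^ (1 : ℝ) := by rw [Real.rpow_one]
      _ = (t - x) ^ (-α - 1 + 1) := (Real.rpow_add hpos _ _).symm
      _ = (t - x) ^ (-α) := by ring_nf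
  -- integrability of p
  have Ip : IntegrableOn (fun x : ℝ => (t - x) ^ (-α - 1) * (f t - f x)) (Ioo 0 t) := by
    apply Integrable.mono' hMbase
    · exact ((hrpow_cont (-α - 1)).mul (continuousOn_const.sub hfcont)).aestronglyMeasurable
        measurableSet_Ioo
    · rw [ae_restrict_iff' measurableSet_Ioo]
      refine Eventually.of_forall fun x hx => ?_
      have hpos : 0 < t - x := sub_pos.2 hx.2
      have hb : ‖f t - f x‖ ≤ M * (t - x) := by
        have h' := hlip x (Ioo_subset_Icc_self hx) t (right_mem_Icc.2 ht.le)
        simpa [Real.norm_eq_abs, abs_of_pos hpos] using h'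
      calc ‖(t - x) ^ (-α - 1) * (f t - f x)‖
          = (t - x) ^ (-α - 1) * ‖f t - f x‖ := by
            rw [norm_mul, Real.norm_eq_abs ((t-x) ^ (-α-1)),
              abs_of_nonneg (Real.rpow_nonneg hpos.le _)]
        _ ≤ (t - x) ^ (-α - 1) * (M * (t - x)) :=
            mul_le_mul_of_nonneg_left hb (Real.rpow_nonneg hpos.le _)
        _ = M * (t - x) ^ (-α) := by
            rw [← rpow_mul_self x hx]; ring
  have Iq : IntegrableOn (fun x : ℝ => (t - x) ^ (-α) * deriv f x) (Ioo 0 t) := by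
    apply Integrable.mono' hMbase
    · exact (((hrpow_cont (-α)).aestronglyMeasurable measurableSet_Ioo).mul
        (measurable_deriv f).aestronglyMeasurable.restrict)
    · rw [ae_restrict_iff' measurableSet_Ioo]
      refine Eventually.of_forall fun x hx => ?_
      have hpos : 0 < t - x := sub_pos.2 hx.2
      calc ‖(t - x) ^ (-α) * deriv f x‖
          = (t - x) ^ (-α) * ‖deriv f x‖ := by
            rw [norm_mul, Real.norm_eq_abs ((t-x) ^ (-α)),
              abs_of_nonneg (Real.rpow_nonneg hpos.le _)]
        _ ≤ (t - x) ^ (-α) * M :=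
            mul_le_mul_of_nonneg_left (hderiv_bound x hx) (Real.rpow_nonneg hpos.le _)
        _ = M * (t - x) ^ (-α) := mul_comm _ _
  set u : ℝ → ℝ := fun τ => (t - τ) ^ (-α) * (f τ - f t) with hu_def
  set w : ℝ → ℝ := fun x =>
    -α * ((t - x) ^ (-α - 1) * (f t - f x)) + (t - x) ^ (-α) * deriv f x with hw_def
  have hud : ∀ x ∈ Ioo 0 t, HasDerivAt u (w x) x := by
    intro x hx
    have hpos : 0 < t - x := sub_pos.2 hx.2
    have h1 : HasDerivAt (fun τ : ℝ => t - τ) (-1) x := by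
      simpa using (hasDerivAt_id x).const_sub t
    have h2 : HasDerivAt (fun τ : ℝ => (t - τ) ^ (-α))
        ((-1) * (-α) * (t - x) ^ (-α - 1)) x := by
      have := h1.rpow_const (p := -α) (Or.inl hpos.ne')
      convert this using 1
    have h3 := h2.fun_mul ((hderiv x hx).sub_const (f t))
    refine h3.congr_deriv ?_
    rw [hw_def]
    ring
  have hIw : IntegrableOn w (Ioo 0 t) := (Ip.const_mul (-α)).add Iq
  have hFTC : ∀ b ∈ Ioo 0 t, ∫ x in Ioc 0 b, w x = u b - u 0 := by
    intro b hb
    rw [← intervalIntegral.integral_of_le hb.1.le]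
    apply intervalIntegral.integral_eq_sub_of_hasDeriv_right_of_le hb.1.le
    · apply ContinuousOn.mul
      · apply ContinuousOn.rpow_const (continuous_const.sub continuous_id).continuousOn
        intro x hx
        exact Or.inl (sub_pos.2 (lt_of_le_of_lt hx.2 hb.2)).ne'
      · exact (hf.continuousOn.mono (Icc_subset_Icc le_rfl hb.2.le)).sub continuousOn_const
    · intro x hx
      exact (hud x ⟨hx.1, hx.2.trans hb.2⟩).hasDerivWithinAt
    · rw [intervalIntegrable_iff_integrableOn_Ioc_of_le hb.1.le]
      exact hIw.mono_set fun x hx => ⟨hx.1, lt_of_le_of_lt hx.2 hb.2⟩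
  -- continuity of the primitive
  have hIcc : IntegrableOn w (Icc 0 t) := by
    rw [IntegrableOn, ← Measure.restrict_congr_set Ioo_ae_eq_Icc]
    exact hIw
  have hPhi : ContinuousOn (fun b => ∫ x in Ioc 0 b, w x) (Icc 0 t) :=
    intervalIntegral.continuousOn_primitive hIcc
  have h1 : Tendsto (fun b => ∫ x in Ioc 0 b, w x) (𝓝[<] t)
      (𝓝 (∫ x in Ioc 0 t, w x)) := by
    have h := (hPhi t (right_mem_Icc.2 ht.le)).tendsto
    rw [← nhdsWithin_Ioo_eq_nhdsLT ht]
    exact h.mono_left (nhdsWithin_mono t Ioo_subset_Icc_self)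
  have hu_lim : Tendsto u (𝓝[<] t) (𝓝 0) := by
    apply squeeze_zero_norm' (a := fun b => M * (t - b) ^ (1 - α))
    · filter_upwards [Ioo_mem_nhdsLT_of_mem (⟨ht, le_rfl⟩ : t ∈ Ioc 0 t)] with b hb
      have hpos : 0 < t - b := sub_pos.2 hb.2
      have hbnd : ‖f b - f t‖ ≤ M * (t - b) := by
        have h' := hlip t (right_mem_Icc.2 ht.le) b (Ioo_subset_Icc_self hb)
        simpa [Real.norm_eq_abs, abs_of_nonpos (by linarith : b - t ≤ 0)] using h'
      calc ‖u b‖ = (t - b) ^ (-α) * ‖f b - f t‖ := by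
            rw [hu_def]
            simp only [norm_mul, Real.norm_eq_abs ((t-b) ^ (-α)),
              abs_of_nonneg (Real.rpow_nonneg hpos.le _)]
        _ ≤ (t - b) ^ (-α) * (M * (t - b)) :=
            mul_le_mul_of_nonneg_left hbnd (Real.rpow_nonneg hpos.le _)
        _ = M * ((t - b) ^ (-α) * (t - b) ^ (1:ℝ)) := by rw [Real.rpow_one]; ring
        _ = M * (t - b) ^ (1 - α) := by
            rw [← Real.rpow_add hpos]; ring_nf
    · have h0 : Tendsto (fun b : ℝ => t - b) (𝓝[<] t) (𝓝 0) := by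
        have hc : Tendsto (fun b : ℝ => t - b) (𝓝 t) (𝓝 (t - t)) :=
          (continuous_const.sub continuous_id).tendsto t
        rw [sub_self] at hc
        exact hc.mono_left nhdsWithin_le_nhds
      have h3 : Tendsto (fun b => (t - b) ^ (1 - α)) (𝓝[<] t) (𝓝 0) := by
        have hc := (Real.continuousAt_rpow_const 0 (1 - α)
          (Or.inr (by linarith))).tendsto.comp h0
        simpa [Function.comp_def, Real.zero_rpow (by linarith : (1:ℝ) - α ≠ 0)] using hc
      simpa using h3.const_mul M
  have h2 : Tendsto (fun b => u b - u 0) (𝓝[<] t) (𝓝 (0 - u 0)) :=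
    hu_lim.sub_const (u 0)
  have h1' : Tendsto (fun b => u b - u 0) (𝓝[<] t) (𝓝 (∫ x in Ioc 0 t, w x)) := by
    apply h1.congr'
    filter_upwards [Ioo_mem_nhdsLT_of_mem (⟨ht, le_rfl⟩ : t ∈ Ioc 0 t)] with b hb
    exact hFTC b hb
  have hkey : ∫ x in Ioo 0 t, w x = t ^ (-α) * (f t - f 0) := by
    have he := tendsto_nhds_unique h1' h2
    rw [integral_Ioc_eq_integral_Ioo] at he
    rw [he, hu_def]
    simp only [sub_zero]
    ring
  have hsplit : ∫ x in Ioo 0 t, w x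
      = -α * (∫ x in Ioo 0 t, (t - x) ^ (-α - 1) * (f t - f x))
        + ∫ x in Ioo 0 t, (t - x) ^ (-α) * deriv f x := by
    rw [hw_def, integral_add (Ip.const_mul (-α)) Iq, integral_const_mul]
  -- change of variables s ↦ t - t*s
  have hinj : InjOn (fun s : ℝ => t - t * s) (Ioo 0 1) := by
    intro a _ b _ h
    simp only at h
    have hab : t * a = t * b := by linarith
    exact mul_left_cancel₀ ht.ne' hab
  have himg : (fun s : ℝ => t - t * s) '' Ioo 0 1 = Ioo 0 t := by
    ext x
    simp only [mem_image, mem_Ioo]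
    constructor
    · rintro ⟨s, ⟨h0, h1⟩, rfl⟩
      constructor <;> nlinarith
    · rintro ⟨h0, h1⟩
      refine ⟨(t - x) / t, ⟨div_pos (by linarith) ht, ?_⟩, by field_simp; ring⟩
      rw [div_lt_one ht]; linarith
  have hder : ∀ s ∈ Ioo (0:ℝ) 1, HasDerivWithinAt (fun s : ℝ => t - t * s) (-t) (Ioo 0 1) s := by
    intro s _
    have hd : HasDerivAt (fun s : ℝ => t - t * s) (-(t * 1)) s :=
      ((hasDerivAt_id s).const_mul t).const_sub t
    simpa using hd.hasDerivWithinAt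
  have hCOV := integral_image_eq_integral_abs_deriv_smul measurableSet_Ioo hder hinj
    (fun x => (t - x) ^ (-α - 1) * (f t - f x))
  rw [himg] at hCOV
  have habs : |(-t)| = t := by rw [abs_neg, abs_of_pos ht]
  have hfinal : (∫ x in Ioo 0 t, (t - x) ^ (-α - 1) * (f t - f x))
      = t ^ (1 - α) * ∫ τ in Ioo (0:ℝ) 1, ((f t - f (t - t * τ)) / (t * τ)) * τ ^ (-α) := by
    rw [hCOV, ← integral_const_mul]
    apply setIntegral_congr_fun measurableSet_Ioo
    intro s hs
    have hs0 : 0 < s := hs.1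
    have hts : 0 < t * s := mul_pos ht hs0
    have e0 : t - (t - t * s) = t * s := by ring
    simp only [smul_eq_mul, abs_neg, abs_of_pos ht, e0]
    have e1 : (t * s) ^ (-α - 1) = (t * s) ^ (-α) * (t * s)⁻¹ := by
      rw [← Real.rpow_neg_one (t * s), ← Real.rpow_add hts]
      ring_nf
    have e2 : (t * s) ^ (-α) = t ^ (-α) * s ^ (-α) := Real.mul_rpow ht.le hs0.le
    have e3 : t ^ (1 - α) = t ^ (1:ℝ) * t ^ (-α) := by
      rw [← Real.rpow_add ht]; ring_nf
    rw [e1, e2, e3, Real.rpow_one]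
    field_simp
  have hq : ∫ x in Ioo 0 t, (t - x) ^ (-α) * deriv f x
      = t ^ (-α) * (f t - f 0)
        + α * (t ^ (1 - α)
            * ∫ τ in Ioo (0:ℝ) 1, ((f t - f (t - t * τ)) / (t * τ)) * τ ^ (-α)) := by
    have h := hkey
    rw [hsplit, hfinal] at h
    linarith
  congr 1
  rw [hq, Real.rpow_neg ht.le]
  ring
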